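/- Let P(λ) = Σ_{i=0}^k λ^i A_i be an m×n matrix polynomial of grade k with m ≥ n, and suppose L(λ) ∈ 𝕃₁(P) has full Z-rank and nonzero right ansatz vector v. Then the map 𝓛_v : N_l(L) → N_l(P) given by y(λ) ↦ (v^T⊗I_m)y(λ) is a surjective F(λ)-linear map. Furthermore, 𝓛_v maps the vector polynomials in N_l(L) onto the vector polynomials in N_l(P), and for every vector polynomial q(λ) ∈ N_l(P) of degree δ there exists a vector polynomial y(λ) ∈ N_l(L) of degree exactly δ with 𝓛_v(y(λ)) = q(λ). -/

import Mathlib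

noncomputable section

open Polynomial Matrix

namespace GLin

variable {F : Type*} [RCLike F]

/-! ### Matrix polynomials and pencils -/

/-- The matrix polynomial `P(λ) = ∑_{i=0}^k λ^i A_i` determined by its
coefficient matrices `A_0, …, A_k` (grade `k`). -/
def matPoly {k m n : ℕ} (A : Fin (k + 1) → Matrix (Fin m) (Fin n) F) :
    Matrix (Fin m) (Fin n) F[X] :=
  Matrix.of fun r c => ∑ i : Fin (k + 1), Polynomial.C (A i r c) * Polynomial.X ^ (i : ℕ)

/-- The matrix pencil `L(λ) = λ X + Y`. -/
def pencil {ρ γ : Type*} (Xc Yc : Matrix ρ γ F) : Matrix ρ γ F[X] :=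
  Matrix.of fun i j => Polynomial.C (Xc i j) * Polynomial.X + Polynomial.C (Yc i j)

/-- `Λ_k(λ) ⊗ I_n` where `Λ_k(λ) = (λ^{k-1}, …, λ, 1)ᵀ`. -/
def Lam (F : Type*) [RCLike F] (k n : ℕ) : Matrix (Fin k × Fin n) (Fin n) F[X] :=
  Matrix.of fun p c => if p.2 = c then Polynomial.X ^ (k - 1 - (p.1 : ℕ)) else 0

/-- `Λ_k(λ)ᵀ ⊗ I_m`. -/
def LamRow (F : Type*) [RCLike F] (k m : ℕ) : Matrix (Fin m) (Fin k × Fin m) F[X] :=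
  Matrix.of fun r p => if r = p.2 then Polynomial.X ^ (k - 1 - (p.1 : ℕ)) else 0

/-- `v ⊗ P(λ)`. -/
def vkron {k m n : ℕ} (v : Fin k → F) (P : Matrix (Fin m) (Fin n) F[X]) :
    Matrix (Fin k × Fin m) (Fin n) F[X] :=
  Matrix.of fun p c => Polynomial.C (v p.1) * P p.2 c

/-- `wᵀ ⊗ P(λ)`. -/
def wkron {k m n : ℕ} (w : Fin k → F) (P : Matrix (Fin m) (Fin n) F[X]) :
    Matrix (Fin m) (Fin k × Fin n) F[X] :=
  Matrix.of fun r q => Polynomial.C (w q.1) * P r q.2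

/-- The defining identity of `𝕃₁(P)`: `L(λ)(Λ_k(λ) ⊗ I_n) = v ⊗ P(λ)`. -/
def RightAnsatz {k m n : ℕ} (P : Matrix (Fin m) (Fin n) F[X])
    (L : Matrix (Fin k × Fin m) (Fin k × Fin n) F[X]) (v : Fin k → F) : Prop :=
  L * Lam F k n = vkron v P

/-- The defining identity of `𝕃₂(P)`: `(Λ_k(λ)ᵀ ⊗ I_m) L(λ) = wᵀ ⊗ P(λ)`. -/
def LeftAnsatz {k m n : ℕ} (P : Matrix (Fin m) (Fin n) F[X])
    (L : Matrix (Fin k × Fin m) (Fin k × Fin n) F[X]) (w : Fin k → F) : Prop :=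
  LamRow F k m * L = wkron w P

/-- The vector `α e₁ ∈ F^k`. -/
def e1 {k : ℕ} (α : F) : Fin k → F := fun i => if (i : ℕ) = 0 then α else 0

/-- `M ⊗ I_m`. -/
def kronId {k m : ℕ} (M : Matrix (Fin k) (Fin k) F) :
    Matrix (Fin k × Fin m) (Fin k × Fin m) F :=
  Matrix.of fun p q => if p.2 = q.2 then M p.1 q.1 else 0

/-! ### (strong) g-linearizations -/

/-- `diag(P(λ), I_{k-1} ⊗ I_{m,n})`. -/
def glinTarget {k m n : ℕ} (P : Matrix (Fin m) (Fin n) F[X]) :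
    Matrix (Fin k × Fin m) (Fin k × Fin n) F[X] :=
  Matrix.of fun p q =>
    if p.1 = q.1 then
      (if (p.1 : ℕ) = 0 then P p.2 q.2 else if (p.2 : ℕ) = (q.2 : ℕ) then 1 else 0)
    else 0

/-- A `km × kn` pencil (or matrix polynomial) `L` is a g-linearization of the `m × n`
matrix polynomial `P` of grade `k` if `E(λ) L(λ) G(λ) = diag(P(λ), I_{k-1} ⊗ I_{m,n})`
for unimodular `E`, `G`. -/
def IsGLin {k m n : ℕ} (P : Matrix (Fin m) (Fin n) F[X])
    (L : Matrix (Fin k × Fin m) (Fin k × Fin n) F[X]) : Prop :=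
  ∃ (E : Matrix (Fin k × Fin m) (Fin k × Fin m) F[X])
    (G : Matrix (Fin k × Fin n) (Fin k × Fin n) F[X]),
      IsUnit E.det ∧ IsUnit G.det ∧ E * L * G = glinTarget P

/-- grade-`N` reversal `rev_N P(λ) = λ^N P(1/λ)`, entrywise. -/
def revMat {ρ γ : Type*} (N : ℕ) (P : Matrix ρ γ F[X]) : Matrix ρ γ F[X] :=
  P.map fun p => Polynomial.reflect N p

/-- Strong g-linearization of the grade-`k` matrix polynomial with coefficients `A`. -/
def IsStrongGLin {k m n : ℕ} (A : Fin (k + 1) → Matrix (Fin m) (Fin n) F)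
    (L : Matrix (Fin k × Fin m) (Fin k × Fin n) F[X]) : Prop :=
  IsGLin (matPoly A) L ∧ IsGLin (revMat k (matPoly A)) (revMat 1 L)

/-! ### linearizations (rectangular, of size `(m+s) × (n+s)`) -/

/-- A matrix polynomial `L` (indexed by arbitrary finite types of cardinalities
`m + s` and `n + s`) is a linearization of `P` if, after identifying the index types
with `Fin m ⊕ Fin s` and `Fin n ⊕ Fin s`, one has `E(λ) L(λ) G(λ) = diag(P(λ), I_s)`
for unimodular `E`, `G`. -/
def IsLin {m n : ℕ} (s : ℕ) (P : Matrix (Fin m) (Fin n) F[X])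
    {ρ γ : Type*} [Fintype ρ] [DecidableEq ρ] [Fintype γ] [DecidableEq γ]
    (L : Matrix ρ γ F[X]) : Prop :=
  ∃ (er : ρ ≃ (Fin m ⊕ Fin s)) (ec : γ ≃ (Fin n ⊕ Fin s))
    (E : Matrix (Fin m ⊕ Fin s) (Fin m ⊕ Fin s) F[X])
    (G : Matrix (Fin n ⊕ Fin s) (Fin n ⊕ Fin s) F[X]),
      IsUnit E.det ∧ IsUnit G.det ∧
        E * Matrix.reindex er ec L * G = Matrix.fromBlocks P 0 0 1

/-- Strong linearization of the grade-`k` matrix polynomial with coefficients `A`. -/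
def IsStrongLin {k m n : ℕ} (s : ℕ) (A : Fin (k + 1) → Matrix (Fin m) (Fin n) F)
    {ρ γ : Type*} [Fintype ρ] [DecidableEq ρ] [Fintype γ] [DecidableEq γ]
    (L : Matrix ρ γ F[X]) : Prop :=
  IsLin s (matPoly A) L ∧ IsLin s (revMat k (matPoly A)) (revMat 1 L)

/-! ### shifted sums -/

/-- Column shifted sum `X ⊞→ Y`. -/
def colShiftSum {k m n : ℕ} (Xc Yc : Matrix (Fin k × Fin m) (Fin k × Fin n) F) :
    Matrix (Fin k × Fin m) (Fin (k + 1) × Fin n) F :=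
  Matrix.of fun p q =>
    (if h : (q.1 : ℕ) < k then Xc p (⟨(q.1 : ℕ), h⟩, q.2) else 0) +
    (if h : 0 < (q.1 : ℕ) then
        Yc p (⟨(q.1 : ℕ) - 1, by have := q.1.isLt; omega⟩, q.2)
      else 0)

/-- Row shifted sum `X ⊞↓ Y`. -/
def rowShiftSum {k m n : ℕ} (Xc Yc : Matrix (Fin k × Fin m) (Fin k × Fin n) F) :
    Matrix (Fin (k + 1) × Fin m) (Fin k × Fin n) F :=
  Matrix.of fun p q =>
    (if h : (p.1 : ℕ) < k then Xc (⟨(p.1 : ℕ), h⟩, p.2) q else 0) +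
    (if h : 0 < (p.1 : ℕ) then
        Yc (⟨(p.1 : ℕ) - 1, by have := p.1.isLt; omega⟩, p.2) q
      else 0)

/-! ### the parametrization of `𝕃₁(P)` and `𝕃₂(P)` -/

/-- `X = [v ⊗ A_k ∣ -W]`. -/
def L1X {k m n : ℕ} (A : Fin (k + 1) → Matrix (Fin m) (Fin n) F) (v : Fin k → F)
    (W : Matrix (Fin k × Fin m) (Fin (k - 1) × Fin n) F) :
    Matrix (Fin k × Fin m) (Fin k × Fin n) F :=
  Matrix.of fun p q =>
    if h : (q.1 : ℕ) = 0 then v p.1 * A (Fin.last k) p.2 q.2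
    else -W p (⟨(q.1 : ℕ) - 1, by have := q.1.isLt; omega⟩, q.2)

/-- `Y = [W + v ⊗ [A_{k-1} ⋯ A_1] ∣ v ⊗ A_0]`. -/
def L1Y {k m n : ℕ} (A : Fin (k + 1) → Matrix (Fin m) (Fin n) F) (v : Fin k → F)
    (W : Matrix (Fin k × Fin m) (Fin (k - 1) × Fin n) F) :
    Matrix (Fin k × Fin m) (Fin k × Fin n) F :=
  Matrix.of fun p q =>
    if h : (q.1 : ℕ) < k - 1 then
      W p (⟨(q.1 : ℕ), h⟩, q.2) + v p.1 * A (⟨k - 1 - (q.1 : ℕ), by omega⟩) p.2 q.2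
    else v p.1 * A 0 p.2 q.2

/-- `X = [wᵀ ⊗ A_k ; -Ŵ]`. -/
def L2X {k m n : ℕ} (A : Fin (k + 1) → Matrix (Fin m) (Fin n) F) (w : Fin k → F)
    (W : Matrix (Fin (k - 1) × Fin m) (Fin k × Fin n) F) :
    Matrix (Fin k × Fin m) (Fin k × Fin n) F :=
  Matrix.of fun p q =>
    if h : (p.1 : ℕ) = 0 then w q.1 * A (Fin.last k) p.2 q.2
    else -W (⟨(p.1 : ℕ) - 1, by have := p.1.isLt; omega⟩, p.2) q

/-- `Y = [Ŵ + wᵀ ⊗ [A_{k-1}ᵀ ⋯ A_1ᵀ]ᵀ ; wᵀ ⊗ A_0]`. -/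
def L2Y {k m n : ℕ} (A : Fin (k + 1) → Matrix (Fin m) (Fin n) F) (w : Fin k → F)
    (W : Matrix (Fin (k - 1) × Fin m) (Fin k × Fin n) F) :
    Matrix (Fin k × Fin m) (Fin k × Fin n) F :=
  Matrix.of fun p q =>
    if h : (p.1 : ℕ) < k - 1 then
      W (⟨(p.1 : ℕ), h⟩, p.2) q + w q.1 * A (⟨k - 1 - (p.1 : ℕ), by omega⟩) p.2 q.2
    else w q.1 * A 0 p.2 q.2

/-! ### block structure and `Z`-matrices -/

/-- Assemble a `km × kn` matrix from blocks with row split `m + (k-1)m` and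
column split `n + (k-1)n`. -/
def blk {k m n : ℕ} (TL : Matrix (Fin m) (Fin n) F)
    (TR : Matrix (Fin m) (Fin (k - 1) × Fin n) F)
    (BL : Matrix (Fin (k - 1) × Fin m) (Fin n) F)
    (BR : Matrix (Fin (k - 1) × Fin m) (Fin (k - 1) × Fin n) F) :
    Matrix (Fin k × Fin m) (Fin k × Fin n) F :=
  Matrix.of fun p q =>
    if hp : (p.1 : ℕ) = 0 then
      if hq : (q.1 : ℕ) = 0 then TL p.2 q.2
      else TR p.2 (⟨(q.1 : ℕ) - 1, by have := q.1.isLt; omega⟩, q.2)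
    else
      if hq : (q.1 : ℕ) = 0 then
        BL (⟨(p.1 : ℕ) - 1, by have := p.1.isLt; omega⟩, p.2) q.2
      else
        BR (⟨(p.1 : ℕ) - 1, by have := p.1.isLt; omega⟩, p.2)
          (⟨(q.1 : ℕ) - 1, by have := q.1.isLt; omega⟩, q.2)

/-- Assemble `[[Y₁₁, T],[Z, 0]]`, row split `m + (k-1)m`, column split `(k-1)n + n`. -/
def blkY1 {k m n : ℕ} (Y11 : Matrix (Fin m) (Fin (k - 1) × Fin n) F)
    (T : Matrix (Fin m) (Fin n) F)
    (Z : Matrix (Fin (k - 1) × Fin m) (Fin (k - 1) × Fin n) F) :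
    Matrix (Fin k × Fin m) (Fin k × Fin n) F :=
  Matrix.of fun p q =>
    if hp : (p.1 : ℕ) = 0 then
      if hq : (q.1 : ℕ) < k - 1 then Y11 p.2 (⟨(q.1 : ℕ), hq⟩, q.2) else T p.2 q.2
    else
      if hq : (q.1 : ℕ) < k - 1 then
        Z (⟨(p.1 : ℕ) - 1, by have := p.1.isLt; omega⟩, p.2) (⟨(q.1 : ℕ), hq⟩, q.2)
      else 0

/-- Assemble `[[Y₁₁, Z],[T, 0]]`, row split `(k-1)m + m`, column split `n + (k-1)n`. -/
def blkY2 {k m n : ℕ} (Y11 : Matrix (Fin (k - 1) × Fin m) (Fin n) F)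
    (Z : Matrix (Fin (k - 1) × Fin m) (Fin (k - 1) × Fin n) F)
    (T : Matrix (Fin m) (Fin n) F) :
    Matrix (Fin k × Fin m) (Fin k × Fin n) F :=
  Matrix.of fun p q =>
    if hp : (p.1 : ℕ) < k - 1 then
      if hq : (q.1 : ℕ) = 0 then Y11 (⟨(p.1 : ℕ), hp⟩, p.2) q.2
      else Z (⟨(p.1 : ℕ), hp⟩, p.2) (⟨(q.1 : ℕ) - 1, by have := q.1.isLt; omega⟩, q.2)
    else
      if hq : (q.1 : ℕ) = 0 then T p.2 q.2 else 0

/-- The `Z`-matrix of `L = λX + Y ∈ 𝕃₁(P)` with respect to `M`: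
the lower-left `(k-1)m × (k-1)n` block of `(M ⊗ I_m) Y`. -/
def Zmat1 {k m n : ℕ} (M : Matrix (Fin k) (Fin k) F)
    (Yc : Matrix (Fin k × Fin m) (Fin k × Fin n) F) :
    Matrix (Fin (k - 1) × Fin m) (Fin (k - 1) × Fin n) F :=
  Matrix.of fun p q =>
    (kronId M * Yc : Matrix (Fin k × Fin m) (Fin k × Fin n) F)
      (⟨(p.1 : ℕ) + 1, by have := p.1.isLt; omega⟩, p.2)
      (⟨(q.1 : ℕ), by have := q.1.isLt; omega⟩, q.2)

/-- The `Z`-matrix of `L = λX + Y ∈ 𝕃₂(P)` with respect to `M̂`: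
the upper-right `(k-1)m × (k-1)n` block of `Y (M̂ᵀ ⊗ I_n)`. -/
def Zmat2 {k m n : ℕ} (M : Matrix (Fin k) (Fin k) F)
    (Yc : Matrix (Fin k × Fin m) (Fin k × Fin n) F) :
    Matrix (Fin (k - 1) × Fin m) (Fin (k - 1) × Fin n) F :=
  Matrix.of fun p q =>
    (Yc * kronId Mᵀ : Matrix (Fin k × Fin m) (Fin k × Fin n) F)
      (⟨(p.1 : ℕ), by have := p.1.isLt; omega⟩, p.2)
      (⟨(q.1 : ℕ) + 1, by have := q.1.isLt; omega⟩, q.2)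

/-- `L = λX + Y ∈ 𝕃₁(P)` with right ansatz vector `v` has full `Z`-rank. -/
def FullZrank1 {k m n : ℕ} (Yc : Matrix (Fin k × Fin m) (Fin k × Fin n) F)
    (v : Fin k → F) : Prop :=
  ∃ (M : Matrix (Fin k) (Fin k) F) (α : F),
    IsUnit M ∧ α ≠ 0 ∧ M.mulVec v = e1 α ∧ (Zmat1 M Yc).rank = (k - 1) * n

/-- `L = λX + Y ∈ 𝕃₂(P)` with left ansatz vector `w` has full `Z`-rank. -/
def FullZrank2 {k m n : ℕ} (Yc : Matrix (Fin k × Fin m) (Fin k × Fin n) F)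
    (w : Fin k → F) : Prop :=
  ∃ (M : Matrix (Fin k) (Fin k) F) (α : F),
    IsUnit M ∧ α ≠ 0 ∧ M.mulVec w = e1 α ∧ (Zmat2 M Yc).rank = (k - 1) * m

/-! ### null spaces, minimal bases and minimal indices over `F(λ)` -/

/-- A matrix polynomial viewed as a matrix over the field of rational functions. -/
def matRF {ρ γ : Type*} (P : Matrix ρ γ F[X]) : Matrix ρ γ (RatFunc F) :=
  P.map (algebraMap F[X] (RatFunc F))

/-- The right null space `N_r(P) = {x(λ) : P(λ) x(λ) ≡ 0}` over `F(λ)`. -/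
def Nr {ρ γ : Type*} [Fintype γ] (P : Matrix ρ γ F[X]) :
    Submodule (RatFunc F) (γ → RatFunc F) :=
  LinearMap.ker (Matrix.mulVecLin (matRF P))

/-- The left null space `N_l(P) = {y(λ) : y(λ)ᵀ P(λ) ≡ 0}` over `F(λ)`. -/
def Nl {ρ γ : Type*} [Fintype ρ] (P : Matrix ρ γ F[X]) :
    Submodule (RatFunc F) (ρ → RatFunc F) :=
  Nr Pᵀ

/-- The normal rank of a matrix polynomial: its rank over `F(λ)`. -/
def nrank {ρ γ : Type*} [Fintype γ] (P : Matrix ρ γ F[X]) : ℕ :=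
  (matRF P).rank

/-- The rational vector determined by a vector polynomial. -/
def polyVec {γ : Type*} (x : γ → F[X]) : γ → RatFunc F :=
  fun i => algebraMap F[X] (RatFunc F) (x i)

/-- A rational vector is a vector polynomial if all its entries are polynomials. -/
def IsVecPoly {γ : Type*} (x : γ → RatFunc F) : Prop :=
  ∃ p : γ → F[X], x = polyVec p

/-- The degree of a vector polynomial: the greatest degree of its components. -/
def polyVecDeg {γ : Type*} [Fintype γ] (x : γ → F[X]) : ℕ :=
  Finset.univ.sup fun i => (x i).natDegree

/-- A polynomial basis of the subspace `V` of `F(λ)^γ`. -/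
def IsPolyBasis {γ ι : Type*} [Fintype γ]
    (V : Submodule (RatFunc F) (γ → RatFunc F)) (b : ι → γ → F[X]) : Prop :=
  LinearIndependent (RatFunc F) (fun i => polyVec (b i)) ∧
    Submodule.span (RatFunc F) (Set.range fun i => polyVec (b i)) = V

/-- A minimal basis of `V`: a polynomial basis of least order (sum of degrees). -/
def IsMinimalBasis {γ ι : Type*} [Fintype γ] [Fintype ι]
    (V : Submodule (RatFunc F) (γ → RatFunc F)) (b : ι → γ → F[X]) : Prop :=
  IsPolyBasis V b ∧
    ∀ (d : ℕ) (b' : Fin d → γ → F[X]), IsPolyBasis V b' →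
      ∑ i, polyVecDeg (b i) ≤ ∑ i, polyVecDeg (b' i)

/-- `ε` is the list of minimal indices of `V`: some minimal basis of `V` has
`ε` as its list of degrees. -/
def HasMinIndices {γ : Type*} [Fintype γ]
    (V : Submodule (RatFunc F) (γ → RatFunc F)) {d : ℕ} (ε : Fin d → ℕ) : Prop :=
  ∃ b : Fin d → γ → F[X], IsMinimalBasis V b ∧ ∀ i, polyVecDeg (b i) = ε i

/-- `Λ_k(λ) ⊗ x(λ)`. -/
def lamTensor {n : ℕ} (k : ℕ) (x : Fin n → RatFunc F) : Fin k × Fin n → RatFunc F :=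
  fun p => algebraMap F[X] (RatFunc F) (Polynomial.X ^ (k - 1 - (p.1 : ℕ))) * x p.2

/-- The matrix `vᵀ ⊗ I_m` over `F(λ)`; `𝓛_v(y) = (vproj v).mulVec y`. -/
def vproj {k m : ℕ} (v : Fin k → F) : Matrix (Fin m) (Fin k × Fin m) (RatFunc F) :=
  Matrix.of fun r p =>
    if r = p.2 then algebraMap F[X] (RatFunc F) (Polynomial.C (v p.1)) else 0

/-- `(vᵀ ⊗ I_m) y` at the level of vector polynomials. -/
def LvPoly {k m : ℕ} (v : Fin k → F) (y : Fin k × Fin m → F[X]) : Fin m → F[X] :=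
  fun r => ∑ i : Fin k, Polynomial.C (v i) * y (i, r)

/-- The rational subspace spanned by the rows of a matrix polynomial. -/
def rowSpan {ρ γ : Type*} [Fintype γ] (B : Matrix ρ γ F[X]) :
    Submodule (RatFunc F) (γ → RatFunc F) :=
  Submodule.span (RatFunc F) (Set.range fun i => polyVec (B i))

/-- A matrix polynomial is a minimal basis if its rows form a minimal basis of the
rational subspace they span. -/
def IsMinimalBasisMat {ρ γ : Type*} [Fintype ρ] [Fintype γ] (B : Matrix ρ γ F[X]) : Prop :=
  IsMinimalBasis (rowSpan B) (fun i => B i)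

/-- Dual minimal bases: `B ∈ F[λ]^{n₁×n}`, `C ∈ F[λ]^{n₂×n}` minimal bases with
`n₁ + n₂ = n` and `B Cᵀ = 0`. -/
def DualMinBases {ρ ρ' γ : Type*} [Fintype ρ] [Fintype ρ'] [Fintype γ]
    (B : Matrix ρ γ F[X]) (Cm : Matrix ρ' γ F[X]) : Prop :=
  IsMinimalBasisMat B ∧ IsMinimalBasisMat Cm ∧
    Fintype.card ρ + Fintype.card ρ' = Fintype.card γ ∧ B * Cmᵀ = 0

/-! ### norms, singular values -/

/-- Square of the Frobenius norm of a constant matrix. -/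
def frobSq {ρ γ : Type*} [Fintype ρ] [Fintype γ] (Ac : Matrix ρ γ F) : ℝ :=
  ∑ i, ∑ j, ‖Ac i j‖ ^ 2

/-- `‖λX + Y‖_F = sqrt(‖X‖_F² + ‖Y‖_F²)`. -/
def penFrob {ρ γ : Type*} [Fintype ρ] [Fintype γ] (Xc Yc : Matrix ρ γ F) : ℝ :=
  Real.sqrt (frobSq Xc + frobSq Yc)

/-- `‖P‖_F = sqrt(∑ ‖A_i‖_F²)` for `P(λ) = ∑ λ^i A_i`. -/
def famFrob {k m n : ℕ} (A : Fin (k + 1) → Matrix (Fin m) (Fin n) F) : ℝ :=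
  Real.sqrt (∑ i, frobSq (A i))

/-- `‖P‖_F` for a matrix polynomial of grade `g`. -/
def mpolyFrob {ρ γ : Type*} [Fintype ρ] [Fintype γ] (g : ℕ) (P : Matrix ρ γ F[X]) : ℝ :=
  Real.sqrt (∑ i, ∑ j, ∑ d ∈ Finset.range (g + 1), ‖(P i j).coeff d‖ ^ 2)

/-- Square of the Euclidean norm of a vector. -/
def vecNormSq {ι : Type*} [Fintype ι] (x : ι → F) : ℝ := ∑ i, ‖x i‖ ^ 2

/-- The smallest singular value of a matrix. -/
def sigmaMin {ρ γ : Type*} [Fintype ρ] [Fintype γ] (Ac : Matrix ρ γ F) : ℝ :=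
  if Fintype.card γ ≤ Fintype.card ρ then
    sInf {r : ℝ | ∃ x : γ → F, vecNormSq x = 1 ∧ r = Real.sqrt (vecNormSq (Ac.mulVec x))}
  else
    sInf {r : ℝ | ∃ y : ρ → F, vecNormSq y = 1 ∧ r = Real.sqrt (vecNormSq (Acᴴ.mulVec y))}

/-- The spectral norm (2-norm) of a matrix. -/
def norm2 {ρ γ : Type*} [Fintype ρ] [Fintype γ] (Ac : Matrix ρ γ F) : ℝ :=
  sSup {r : ℝ | ∃ x : γ → F, vecNormSq x = 1 ∧ r = Real.sqrt (vecNormSq (Ac.mulVec x))}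

/-- `κ₂(D) = ‖D‖₂ ‖D⁻¹‖₂`. -/
def cond2 {ρ : Type*} [Fintype ρ] [DecidableEq ρ] (Dc : Matrix ρ ρ F) : ℝ :=
  norm2 Dc * norm2 Dc⁻¹

/-! ### pencils used in the backward error analysis -/

/-- `B(λ) = λ [0 ∣ -R̃] + [R̃ ∣ 0]`, i.e. `R̃ (H_{k-1}(λ) ⊗ I_n)` up to sign conventions. -/
def Bpencil {k n : ℕ} (R : Matrix (Fin (k - 1) × Fin n) (Fin (k - 1) × Fin n) F) :
    Matrix (Fin (k - 1) × Fin n) (Fin k × Fin n) F[X] :=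
  Matrix.of fun p q =>
    (if h : (q.1 : ℕ) < k - 1 then Polynomial.C (R p (⟨(q.1 : ℕ), h⟩, q.2)) else 0) +
    (if h : 0 < (q.1 : ℕ) then
        Polynomial.X *
          Polynomial.C (-R p (⟨(q.1 : ℕ) - 1, by have := q.1.isLt; omega⟩, q.2))
      else 0)

/-- The coefficient of `λ` in `H_{k-1}(λ) ⊗ I_n`. -/
def Hlam (F : Type*) [RCLike F] (k n : ℕ) :
    Matrix (Fin (k - 1) × Fin n) (Fin k × Fin n) F :=
  Matrix.of fun p q => if p.2 = q.2 ∧ (q.1 : ℕ) = (p.1 : ℕ) + 1 then 1 else 0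

/-- The constant coefficient of `H_{k-1}(λ) ⊗ I_n`. -/
def Hconst (F : Type*) [RCLike F] (k n : ℕ) :
    Matrix (Fin (k - 1) × Fin n) (Fin k × Fin n) F :=
  Matrix.of fun p q => if p.2 = q.2 ∧ (q.1 : ℕ) = (p.1 : ℕ) then -1 else 0

/-- The convolution matrix `C_j(λ Xc + Yc)` of a pencil, with `j+1` block columns. -/
def convPencil {ρ γ : Type*} (Xc Yc : Matrix ρ γ F) (j : ℕ) :
    Matrix (Fin (j + 2) × ρ) (Fin (j + 1) × γ) F :=
  Matrix.of fun r c =>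
    if (r.1 : ℕ) = (c.1 : ℕ) then Xc r.2 c.2
    else if (r.1 : ℕ) = (c.1 : ℕ) + 1 then Yc r.2 c.2 else 0

/-- λ-coefficient of the trimmed pencil `L̂_t(λ)`:
`[[α A_k, X₁₂],[0, -R̃]]` with row split `m + (k-1)n`. -/
def LtX {k m n : ℕ} (α : F) (Ak : Matrix (Fin m) (Fin n) F)
    (X12 : Matrix (Fin m) (Fin (k - 1) × Fin n) F)
    (R : Matrix (Fin (k - 1) × Fin n) (Fin (k - 1) × Fin n) F) :
    Matrix (Fin m ⊕ (Fin (k - 1) × Fin n)) (Fin k × Fin n) F :=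
  Matrix.of fun s q =>
    Sum.elim
      (fun r => if h : (q.1 : ℕ) = 0 then α * Ak r q.2
        else X12 r (⟨(q.1 : ℕ) - 1, by have := q.1.isLt; omega⟩, q.2))
      (fun p => if h : (q.1 : ℕ) = 0 then 0
        else -R p (⟨(q.1 : ℕ) - 1, by have := q.1.isLt; omega⟩, q.2)) s

/-- Constant coefficient of the trimmed pencil `L̂_t(λ)`:
`[[Y₁₁, α A₀],[R̃, 0]]` with row split `m + (k-1)n`. -/
def LtY {k m n : ℕ} (α : F) (A0 : Matrix (Fin m) (Fin n) F)
    (Y11 : Matrix (Fin m) (Fin (k - 1) × Fin n) F)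
    (R : Matrix (Fin (k - 1) × Fin n) (Fin (k - 1) × Fin n) F) :
    Matrix (Fin m ⊕ (Fin (k - 1) × Fin n)) (Fin k × Fin n) F :=
  Matrix.of fun s q =>
    Sum.elim
      (fun r => if h : (q.1 : ℕ) < k - 1 then Y11 r (⟨(q.1 : ℕ), h⟩, q.2)
        else α * A0 r q.2)
      (fun p => if h : (q.1 : ℕ) < k - 1 then R p (⟨(q.1 : ℕ), h⟩, q.2) else 0) s

/-! ### trimming -/

/-- The rows `[0 ∣ Q₂*] (M ⊗ I_m)`. -/
def bottomRows {k m n c : ℕ} (M : Matrix (Fin k) (Fin k) F)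
    (Q : Matrix (Fin (k - 1) × Fin m) ((Fin (k - 1) × Fin n) ⊕ Fin c) F) :
    Matrix (Fin c) (Fin k × Fin m) F :=
  (Matrix.of fun (j : Fin c) (p : Fin k × Fin m) =>
      if h : (p.1 : ℕ) = 0 then 0
      else star (Q (⟨(p.1 : ℕ) - 1, by have := p.1.isLt; omega⟩, p.2) (Sum.inr j)))
    * kronId M

/-- The square matrix `[D ; [0 ∣ Q₂*](M ⊗ I_m)]` whose invertibility makes `D` admissible. -/
def trimAux {k m n c : ℕ} (M : Matrix (Fin k) (Fin k) F)
    (Q : Matrix (Fin (k - 1) × Fin m) ((Fin (k - 1) × Fin n) ⊕ Fin c) F)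
    (D : Matrix (Fin m ⊕ (Fin (k - 1) × Fin n)) (Fin k × Fin m) F) :
    Matrix ((Fin m ⊕ (Fin (k - 1) × Fin n)) ⊕ Fin c) (Fin k × Fin m) F :=
  Matrix.of (Sum.elim (fun i j => D i j) (fun i j => bottomRows M Q i j))

/-- The columns `(M̂ᵀ ⊗ I_n) [0 ; Q₂]`. -/
def rightCols {k m n c : ℕ} (M : Matrix (Fin k) (Fin k) F)
    (Q : Matrix (Fin (k - 1) × Fin n) ((Fin (k - 1) × Fin m) ⊕ Fin c) F) :
    Matrix (Fin k × Fin n) (Fin c) F :=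
  kronId Mᵀ *
    (Matrix.of fun (q : Fin k × Fin n) (j : Fin c) =>
      if h : (q.1 : ℕ) = 0 then 0
      else Q (⟨(q.1 : ℕ) - 1, by have := q.1.isLt; omega⟩, q.2) (Sum.inr j))

/-- The square matrix `[D̂ ∣ (M̂ᵀ ⊗ I_n)[0 ; Q₂]]` whose invertibility makes `D̂` admissible. -/
def trimAux2 {k m n c : ℕ} (M : Matrix (Fin k) (Fin k) F)
    (Q : Matrix (Fin (k - 1) × Fin n) ((Fin (k - 1) × Fin m) ⊕ Fin c) F)
    (D : Matrix (Fin k × Fin n) (Fin n ⊕ (Fin (k - 1) × Fin m)) F) :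
    Matrix (Fin k × Fin n) ((Fin n ⊕ (Fin (k - 1) × Fin m)) ⊕ Fin c) F :=
  Matrix.of fun q s => Sum.elim (fun t => D q t) (fun j => rightCols M Q q j) s


/-! ### auxiliary material for statement 9 -/

section Statement9Aux

variable {F : Type*} [RCLike F] {k m n : ℕ}

lemma g9_sum_split {β : Type*} [AddCommMonoid β] (hk : 0 < k) (f : Fin k → β) :
    ∑ i, f i = f ⟨0, hk⟩ + ∑ i : Fin (k - 1), f ⟨(i : ℕ) + 1, by omega⟩ := by
  obtain ⟨k', rfl⟩ : ∃ k', k = k' + 1 := ⟨k - 1, by omega⟩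
  rw [Fin.sum_univ_succ]
  rfl

lemma g9_left_inv {ρ γ : Type*} [Fintype ρ] [Fintype γ] [DecidableEq ρ] [DecidableEq γ]
    (Z : Matrix ρ γ F) (h : Z.rank = Fintype.card γ) : ∃ B : Matrix γ ρ F, B * Z = 1 := by
  have h1 := LinearMap.finrank_range_add_finrank_ker Z.mulVecLin
  rw [Module.finrank_fintype_fun_eq_card] at h1
  have hr : Module.finrank F (LinearMap.range Z.mulVecLin) = Fintype.card γ := h
  have hker : LinearMap.ker Z.mulVecLin = ⊥ := by
    rw [← Submodule.finrank_eq_zero (R := F)]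
    omega
  obtain ⟨g, hg⟩ := LinearMap.exists_leftInverse_of_injective Z.mulVecLin hker
  refine ⟨LinearMap.toMatrix' g, ?_⟩
  have h2 := LinearMap.toMatrix'_comp g Z.mulVecLin
  rw [hg, LinearMap.toMatrix'_id] at h2
  rw [← Matrix.toLin'_apply'] at h2
  rw [LinearMap.toMatrix'_toLin'] at h2
  exact h2.symm

lemma g9_coeff (hk : 0 < k) (x y : Fin k → F) (f : F[X])
    (h : ∑ j : Fin k, (C (x j) * X + C (y j)) * X ^ (k - 1 - (j : ℕ)) = f) :
    (x ⟨0, hk⟩ = f.coeff k) ∧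
    (∀ j : Fin k, 0 < (j : ℕ) →
      x j + y ⟨(j : ℕ) - 1, by omega⟩ = f.coeff (k - (j : ℕ))) ∧
    (y ⟨k - 1, by omega⟩ = f.coeff 0) := by
  have hc : ∀ t, f.coeff t =
      (∑ j : Fin k, if t = k - (j : ℕ) then x j else 0) +
      (∑ j : Fin k, if t = k - 1 - (j : ℕ) then y j else 0) := by
    intro t
    rw [← h, Polynomial.finset_sum_coeff, ← Finset.sum_add_distrib]
    refine Finset.sum_congr rfl fun j _ => ?_
    have he : (C (x j) * X + C (y j)) * X ^ (k - 1 - (j : ℕ)) =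
        C (x j) * X ^ (k - (j : ℕ)) + C (y j) * X ^ (k - 1 - (j : ℕ)) := by
      have h2 : k - (j : ℕ) = (k - 1 - (j : ℕ)) + 1 := by have := j.isLt; omega
      rw [h2, pow_succ]; ring
    rw [he, Polynomial.coeff_add, Polynomial.coeff_C_mul, Polynomial.coeff_C_mul,
      Polynomial.coeff_X_pow, Polynomial.coeff_X_pow, mul_ite, mul_ite, mul_one, mul_zero,
      mul_one, mul_zero]
  refine ⟨?_, ?_, ?_⟩
  · rw [hc k, Finset.sum_eq_single (⟨0, hk⟩ : Fin k), Finset.sum_eq_zero, if_pos (by simp)]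
    · simp
    · intro j _; rw [if_neg]; have := j.isLt; omega
    · intro b _ hb
      rw [if_neg]
      have hb' : (b : ℕ) ≠ 0 := fun h0 => hb (Fin.ext h0)
      have := b.isLt; omega
    · simp
  · intro j hj
    rw [hc (k - (j : ℕ))]
    congr 1
    · rw [Finset.sum_eq_single j, if_pos rfl]
      · intro b _ hb
        rw [if_neg]
        have hb' : (b : ℕ) ≠ (j : ℕ) := fun h0 => hb (Fin.ext h0)
        have := b.isLt; have := j.isLt; omega
      · simp
    · rw [Finset.sum_eq_single (⟨(j : ℕ) - 1, by omega⟩ : Fin k), if_pos (by simp; omega)]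
      · intro b _ hb
        rw [if_neg]
        have hb' : (b : ℕ) ≠ (j : ℕ) - 1 := fun h0 => hb (Fin.ext h0)
        have := b.isLt; have := j.isLt; omega
      · simp
  · rw [hc 0, Finset.sum_eq_zero, Finset.sum_eq_single (⟨k - 1, by omega⟩ : Fin k),
      if_pos (by simp)]
    · simp
    · intro b _ hb
      rw [if_neg]
      have hb' : (b : ℕ) ≠ k - 1 := fun h0 => hb (Fin.ext h0)
      have := b.isLt; omega
    · simp
    · intro j _; rw [if_neg]; have := j.isLt; omega

lemma g9_mem_Nl {ρ γ : Type*} [Fintype ρ] [Fintype γ] (P : Matrix ρ γ F[X]) (y : ρ → F[X]) :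
    polyVec y ∈ Nl P ↔ ∀ c, ∑ p, y p * P p c = 0 := by
  unfold Nl Nr matRF
  rw [LinearMap.mem_ker, funext_iff]
  have hkey : ∀ c, ((Pᵀ).map (algebraMap F[X] (RatFunc F))).mulVecLin (polyVec y) c =
      algebraMap F[X] (RatFunc F) (∑ p, y p * P p c) := by
    intro c
    simp only [Matrix.mulVecLin_apply, Matrix.mulVec, dotProduct, Matrix.map_apply,
      Matrix.transpose_apply, polyVec, map_sum]
    exact Finset.sum_congr rfl fun p _ => by rw [← _root_.map_mul, mul_comm]
  constructor
  · intro h c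
    have h2 := h c
    rw [hkey c] at h2
    exact (map_eq_zero_iff _ (RatFunc.algebraMap_injective F)).mp (by simpa using h2)
  · intro h c
    rw [hkey c, h c]
    simp

lemma g9_vproj (v : Fin k → F) (y : Fin k × Fin m → F[X]) :
    (vproj v).mulVec (polyVec y) = polyVec (LvPoly v y) := by
  funext r
  simp only [Matrix.mulVec, dotProduct, vproj, Matrix.of_apply, polyVec, LvPoly, map_sum,
    Fintype.sum_prod_type]
  refine Finset.sum_congr rfl fun i _ => ?_
  simp only [ite_mul, zero_mul]
  rw [Finset.sum_ite_eq]
  simp [_root_.map_mul]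

lemma g9_push (A : Fin (k + 1) → Matrix (Fin m) (Fin n) F)
    (Xc Yc : Matrix (Fin k × Fin m) (Fin k × Fin n) F) (v : Fin k → F)
    (hL : RightAnsatz (matPoly A) (pencil Xc Yc) v)
    (x : Fin k × Fin m → RatFunc F) (hx : x ∈ Nl (pencil Xc Yc)) :
    (vproj v).mulVec x ∈ Nl (matPoly A) := by
  unfold Nl Nr matRF at hx ⊢
  rw [LinearMap.mem_ker] at hx ⊢
  have hx' : ∀ w, ∑ p, algebraMap F[X] (RatFunc F) (pencil Xc Yc p w) * x p = 0 := by
    intro w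
    have h2 := congrFun hx w
    simpa [Matrix.mulVecLin_apply, Matrix.mulVec, dotProduct, Matrix.map_apply,
      Matrix.transpose_apply] using h2
  funext c
  simp only [Matrix.mulVecLin_apply, Matrix.mulVec, dotProduct, Matrix.map_apply,
    Matrix.transpose_apply, Pi.zero_apply]
  calc ∑ r, algebraMap F[X] (RatFunc F) (matPoly A r c) * ∑ p, vproj v r p * x p
      = ∑ r, ∑ i : Fin k, algebraMap F[X] (RatFunc F) (C (v i) * matPoly A r c) * x (i, r) := by
        refine Finset.sum_congr rfl fun r _ => ?_
        rw [Finset.mul_sum, Fintype.sum_prod_type]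
        refine Finset.sum_congr rfl fun i _ => ?_
        simp only [vproj, Matrix.of_apply, ite_mul, zero_mul, mul_ite, mul_zero]
        rw [Finset.sum_ite_eq]
        simp only [Finset.mem_univ, if_true, _root_.map_mul]
        ring
    _ = ∑ p : Fin k × Fin m, algebraMap F[X] (RatFunc F) (vkron v (matPoly A) p c) * x p := by
        rw [Fintype.sum_prod_type, Finset.sum_comm]
        rfl
    _ = ∑ p : Fin k × Fin m,
          algebraMap F[X] (RatFunc F) ((pencil Xc Yc * Lam F k n) p c) * x p := by rw [hL]
    _ = ∑ w : Fin k × Fin n, algebraMap F[X] (RatFunc F) (Lam F k n w c) *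
          ∑ p, algebraMap F[X] (RatFunc F) (pencil Xc Yc p w) * x p := by
        simp only [Matrix.mul_apply, map_sum, Finset.sum_mul, Finset.mul_sum]
        rw [Finset.sum_comm]
        refine Finset.sum_congr rfl fun p _ => Finset.sum_congr rfl fun w _ => ?_
        rw [_root_.map_mul]
        ring
    _ = 0 := by
        refine Finset.sum_eq_zero fun w _ => ?_
        rw [hx' w, mul_zero]

lemma g9_main (hk : 0 < k)
    (A : Fin (k + 1) → Matrix (Fin m) (Fin n) F)
    (Xc Yc : Matrix (Fin k × Fin m) (Fin k × Fin n) F)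
    (v : Fin k → F) (M : Matrix (Fin k) (Fin k) F) (α : F) (hα : α ≠ 0)
    (hMv : M.mulVec v = e1 α)
    (B : Matrix (Fin (k - 1) × Fin n) (Fin (k - 1) × Fin m) F)
    (hB : B * Zmat1 M Yc = 1)
    (hL : RightAnsatz (matPoly A) (pencil Xc Yc) v)
    (q : Fin m → F[X]) (hq : ∀ c, ∑ r, q r * matPoly A r c = 0) :
    ∃ y : Fin k × Fin m → F[X],
      (∀ w, ∑ p, y p * pencil Xc Yc p w = 0) ∧ LvPoly v y = q ∧
        ∀ p, (y p).natDegree ≤ polyVecDeg q := by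
  classical
  have hqd : ∀ r, (q r).natDegree ≤ polyVecDeg q := fun r =>
    Finset.le_sup (f := fun i => (q i).natDegree) (Finset.mem_univ r)
  set d := polyVecDeg q with hd
  have hαα : (C α⁻¹ : F[X]) * C α = 1 := by
    rw [← C_mul, inv_mul_cancel₀ hα, C_1]
  have hk1k : k - 1 ≤ k := by omega
  set z0 : Fin k := ⟨0, hk⟩ with hz0
  set Ae : ℕ → Matrix (Fin m) (Fin n) F :=
    fun i => if h : i < k + 1 then A ⟨i, h⟩ else 0 with hAe
  set g : ℕ → Fin n → F[X] := fun i c => ∑ r, q r * C (Ae i r c) with hg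
  set X' : Fin k → Fin m → Fin k × Fin n → F :=
    fun i r w => ∑ j, M i j * Xc (j, r) w with hX'
  set Y' : Fin k → Fin m → Fin k × Fin n → F :=
    fun i r w => ∑ j, M i j * Yc (j, r) w with hY'
  -- entrywise form of the ansatz
  have hLent : ∀ (p : Fin k × Fin m) (c : Fin n),
      ∑ j : Fin k, (C (Xc p (j, c)) * X + C (Yc p (j, c))) * X ^ (k - 1 - (j : ℕ))
        = C (v p.1) * matPoly A p.2 c := by
    intro p c
    have h0 : (pencil Xc Yc * Lam F k n) p c = vkron v (matPoly A) p c := by rw [hL]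
    rw [Matrix.mul_apply, Fintype.sum_prod_type] at h0
    simp only [pencil, Lam, vkron, Matrix.of_apply, mul_ite, mul_zero] at h0
    simpa [Finset.sum_ite_eq'] using h0
  -- transformed rows
  have hrow : ∀ (i : Fin k) (r : Fin m) (c : Fin n),
      ∑ j : Fin k, (C (X' i r (j, c)) * X + C (Y' i r (j, c))) * X ^ (k - 1 - (j : ℕ))
        = C (e1 α i) * matPoly A r c := by
    intro i r c
    have h1 : ∀ j : Fin k,
        (C (X' i r (j, c)) * X + C (Y' i r (j, c))) * X ^ (k - 1 - (j : ℕ))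
        = ∑ j2, C (M i j2) * ((C (Xc (j2, r) (j, c)) * X + C (Yc (j2, r) (j, c)))
            * X ^ (k - 1 - (j : ℕ))) := by
      intro j
      simp only [hX', hY', map_sum, _root_.map_mul]
      rw [Finset.sum_mul, ← Finset.sum_add_distrib, Finset.sum_mul]
      refine Finset.sum_congr rfl fun j2 _ => by ring
    rw [Finset.sum_congr rfl fun j _ => h1 j, Finset.sum_comm]
    have hM : e1 α i = ∑ j2, M i j2 * v j2 := by
      rw [← hMv]; simp [Matrix.mulVec, dotProduct]
    rw [hM, map_sum, Finset.sum_mul]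
    refine Finset.sum_congr rfl fun j2 _ => ?_
    rw [← Finset.mul_sum, hLent (j2, r) c, _root_.map_mul]
    ring
  -- coefficients of the right-hand side
  have hcoeP : ∀ (r : Fin m) (c : Fin n) (t : ℕ), (matPoly A r c).coeff t = Ae t r c := by
    intro r c t
    simp only [matPoly, Matrix.of_apply, Polynomial.finset_sum_coeff, Polynomial.coeff_C_mul,
      Polynomial.coeff_X_pow, mul_ite, mul_one, mul_zero]
    by_cases ht : t < k + 1
    · rw [Finset.sum_eq_single (⟨t, ht⟩ : Fin (k + 1))]
      · simp [hAe, ht, (by omega : t ≤ k)]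
      · intro b _ hb
        rw [if_neg]
        intro h0
        exact hb (Fin.ext h0.symm)
      · simp
    · rw [Finset.sum_eq_zero, hAe]
      · simp only []
        rw [dif_neg ht]
        rfl
      · intro b _
        rw [if_neg]
        have := b.isLt; omega
  have hco : ∀ (i : Fin k) (r : Fin m) (c : Fin n) (t : ℕ),
      (C (e1 α i) * matPoly A r c).coeff t = e1 α i * Ae t r c := by
    intro i r c t
    rw [Polynomial.coeff_C_mul, hcoeP]
  -- structural relations
  have hX0 : ∀ (i : Fin k) (r : Fin m) (c : Fin n), X' i r (z0, c) = e1 α i * Ae k r c := by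
    intro i r c
    have h2 := (g9_coeff hk (fun j => X' i r (j, c)) (fun j => Y' i r (j, c)) _ (hrow i r c)).1
    rw [hco] at h2
    exact h2
  have hXY : ∀ (i : Fin k) (r : Fin m) (c : Fin n) (j : Fin k), 0 < (j : ℕ) →
      X' i r (j, c) + Y' i r (⟨(j : ℕ) - 1, by have := j.isLt; omega⟩, c)
        = e1 α i * Ae (k - (j : ℕ)) r c := by
    intro i r c j hj
    have h2 := (g9_coeff hk (fun j => X' i r (j, c)) (fun j => Y' i r (j, c)) _
      (hrow i r c)).2.1 j hj
    rw [hco] at h2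
    exact h2
  have hYl : ∀ (i : Fin k) (r : Fin m) (c : Fin n),
      Y' i r (⟨k - 1, by omega⟩, c) = e1 α i * Ae 0 r c := by
    intro i r c
    have h2 := (g9_coeff hk (fun j => X' i r (j, c)) (fun j => Y' i r (j, c)) _
      (hrow i r c)).2.2
    rw [hco] at h2
    exact h2
  have he0 : e1 (k := k) α z0 = α := by simp [e1, hz0]
  have heS : ∀ (i' : Fin (k - 1)), e1 (k := k) α ⟨(i' : ℕ) + 1, by have := i'.isLt; omega⟩
      = 0 := by
    intro i'; simp [e1]
  -- the polynomial relation for q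
  have hg0 : ∀ c, ∑ i ∈ Finset.range (k + 1), X ^ i * g i c = 0 := by
    intro c
    rw [← Fin.sum_univ_eq_sum_range (fun i => X ^ i * g i c) (k + 1)]
    calc ∑ i : Fin (k + 1), X ^ (i : ℕ) * g (i : ℕ) c
        = ∑ i : Fin (k + 1), ∑ r, q r * (C (A i r c) * X ^ (i : ℕ)) := by
          refine Finset.sum_congr rfl fun i _ => ?_
          simp only [hg, hAe]
          rw [Finset.mul_sum]
          refine Finset.sum_congr rfl fun r _ => ?_
          rw [dif_pos i.isLt, Fin.eta]
          ring
      _ = ∑ r, q r * matPoly A r c := by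
          rw [Finset.sum_comm]
          refine Finset.sum_congr rfl fun r _ => ?_
          simp only [matPoly, Matrix.of_apply, Finset.mul_sum]
      _ = 0 := hq c
  have hgd : ∀ i c, (g i c).natDegree ≤ d := by
    intro i c
    refine natDegree_sum_le_of_forall_le _ _ fun r _ => ?_
    exact natDegree_mul_le.trans (by rw [natDegree_C, add_zero]; exact hqd r)
  -- reflection of partial sums
  have hrefl : ∀ (s : ℕ), s ≤ k → ∀ c, ∑ t ∈ Finset.range s, X ^ (k - t) * g (k - t) c
      = ∑ i ∈ Finset.Ico (k - s + 1) (k + 1), X ^ i * g i c := by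
    intro s hs c
    refine Finset.sum_nbij' (fun t => k - t) (fun i => k - i) ?_ ?_ ?_ ?_ ?_
    · intro a ha; simp only [Finset.mem_range] at ha; simp only [Finset.mem_Ico]; omega
    · intro a ha; simp only [Finset.mem_Ico] at ha; simp only [Finset.mem_range]; omega
    · intro a ha; simp only [Finset.mem_range] at ha; omega
    · intro a ha; simp only [Finset.mem_Ico] at ha; omega
    · intro a _; rfl
  -- degree bound for the partial sums
  have hS : ∀ (s : ℕ), s ≤ k → ∀ c,
      (∑ t ∈ Finset.range s, X ^ (s - t) * g (k - t) c).natDegree ≤ d := by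
    intro s hs c
    by_cases h0 : (∑ t ∈ Finset.range s, X ^ (s - t) * g (k - t) c) = 0
    · rw [h0]; simp
    have hXS : X ^ (k - s) * (∑ t ∈ Finset.range s, X ^ (s - t) * g (k - t) c)
        = -∑ i ∈ Finset.range (k - s + 1), X ^ i * g i c := by
      rw [Finset.mul_sum]
      have e2 : ∀ t ∈ Finset.range s,
          X ^ (k - s) * (X ^ (s - t) * g (k - t) c) = X ^ (k - t) * g (k - t) c := by
        intro t ht
        simp only [Finset.mem_range] at ht
        have e3 : k - s + (s - t) = k - t := by omega
        rw [← mul_assoc, ← pow_add, e3]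
      rw [Finset.sum_congr rfl e2, hrefl s hs c]
      refine eq_neg_of_add_eq_zero_right ?_
      have h2 := Finset.sum_range_add_sum_Ico (fun i => X ^ i * g i c)
        (show k - s + 1 ≤ k + 1 by omega)
      rw [hg0 c] at h2
      exact h2
    have hne : (X : F[X]) ^ (k - s) ≠ 0 := pow_ne_zero _ X_ne_zero
    have hdeq : (k - s) + (∑ t ∈ Finset.range s, X ^ (s - t) * g (k - t) c).natDegree
        = (-∑ i ∈ Finset.range (k - s + 1), X ^ i * g i c).natDegree := by
      rw [← hXS, natDegree_mul hne h0, natDegree_pow, natDegree_X, mul_one]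
    have hdle : (-∑ i ∈ Finset.range (k - s + 1), X ^ i * g i c).natDegree ≤ (k - s) + d := by
      rw [natDegree_neg]
      refine natDegree_sum_le_of_forall_le _ _ fun i hi => ?_
      simp only [Finset.mem_range] at hi
      exact natDegree_mul_le.trans
        (by rw [natDegree_X_pow]; exact add_le_add (by omega) (hgd _ _))
    omega
  -- the top blocks
  set XT : Fin k → Fin n → F[X] :=
    fun j c => ∑ r, (C α⁻¹ * q r) * C (X' z0 r (j, c)) with hXT
  set YT : Fin k → Fin n → F[X] :=
    fun j c => ∑ r, (C α⁻¹ * q r) * C (Y' z0 r (j, c)) with hYT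
  -- the auxiliary solution u
  set u : Fin (k - 1) → Fin n → F[X] := fun j' c =>
    -YT (Fin.castLE hk1k j') c
      - ∑ t ∈ Finset.range ((j' : ℕ) + 1), X ^ ((j' : ℕ) + 1 - t) * g (k - t) c with hu
  have hytd : ∀ (j : Fin k) c, (YT j c).natDegree ≤ d := by
    intro j c
    simp only [hYT]
    refine natDegree_sum_le_of_forall_le _ _ fun r _ => ?_
    refine natDegree_mul_le.trans ?_
    rw [natDegree_C, add_zero]
    exact natDegree_mul_le.trans (by rw [natDegree_C, zero_add]; exact hqd r)
  have hud : ∀ (j' : Fin (k - 1)) c, (u j' c).natDegree ≤ d := by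
    intro j' c
    simp only [hu]
    refine (natDegree_sub_le _ _).trans (max_le ?_ ?_)
    · rw [natDegree_neg]; exact hytd _ _
    · exact hS ((j' : ℕ) + 1) (by have := j'.isLt; omega) c
  -- the bottom part z
  set zz : Fin (k - 1) × Fin m → F[X] := fun p =>
    ∑ w : Fin (k - 1) × Fin n, u w.1 w.2 * C (B w p) with hzz
  have hzd : ∀ p, (zz p).natDegree ≤ d := by
    intro p
    simp only [hzz]
    refine natDegree_sum_le_of_forall_le _ _ fun w _ => ?_
    exact natDegree_mul_le.trans (by rw [natDegree_C, add_zero]; exact hud w.1 w.2)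
  have hzY : ∀ (w' : Fin (k - 1) × Fin n),
      ∑ p : Fin (k - 1) × Fin m, zz p
          * C (Y' ⟨(p.1 : ℕ) + 1, by have := p.1.isLt; omega⟩ p.2
              (⟨(w'.1 : ℕ), by have := w'.1.isLt; omega⟩, w'.2))
        = u w'.1 w'.2 := by
    intro w'
    have hZY : ∀ (p : Fin (k - 1) × Fin m), Zmat1 M Yc p w'
        = Y' ⟨(p.1 : ℕ) + 1, by have := p.1.isLt; omega⟩ p.2
            (⟨(w'.1 : ℕ), by have := w'.1.isLt; omega⟩, w'.2) := by
      intro p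
      simp only [Zmat1, Matrix.of_apply]
      erw [Matrix.mul_apply, Fintype.sum_prod_type]
      simp only [kronId, Matrix.of_apply, hY', ite_mul, zero_mul]
      refine Finset.sum_congr rfl fun j _ => ?_
      rw [Finset.sum_ite_eq]
      simp
    calc ∑ p : Fin (k - 1) × Fin m, zz p
          * C (Y' ⟨(p.1 : ℕ) + 1, by have := p.1.isLt; omega⟩ p.2
              (⟨(w'.1 : ℕ), by have := w'.1.isLt; omega⟩, w'.2))
        = ∑ p : Fin (k - 1) × Fin m, zz p * C (Zmat1 M Yc p w') := by
          refine Finset.sum_congr rfl fun p _ => by rw [hZY p]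
      _ = ∑ w : Fin (k - 1) × Fin n, ∑ p : Fin (k - 1) × Fin m,
            u w.1 w.2 * (C (B w p) * C (Zmat1 M Yc p w')) := by
          rw [Finset.sum_comm]
          refine Finset.sum_congr rfl fun p _ => ?_
          simp only [hzz]
          rw [Finset.sum_mul]
          refine Finset.sum_congr rfl fun w _ => by ring
      _ = ∑ w : Fin (k - 1) × Fin n, u w.1 w.2 * C ((B * Zmat1 M Yc) w w') := by
          refine Finset.sum_congr rfl fun w _ => ?_
          rw [Matrix.mul_apply, map_sum, Finset.mul_sum]
          refine Finset.sum_congr rfl fun p _ => by rw [_root_.map_mul]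
      _ = u w'.1 w'.2 := by
          rw [hB]
          rw [Finset.sum_eq_single w']
          · simp [Matrix.one_apply]
          · intro b _ hb
            rw [Matrix.one_apply_ne hb]
            simp
          · simp
  -- assemble y
  set yh : Fin k → Fin m → F[X] := fun i r =>
    if h : (i : ℕ) = 0 then C α⁻¹ * q r
    else zz (⟨(i : ℕ) - 1, by have := i.isLt; omega⟩, r) with hyh
  set y : Fin k × Fin m → F[X] := fun p => ∑ i, C (M i p.1) * yh i p.2 with hy
  have hyh0 : ∀ r, yh z0 r = C α⁻¹ * q r := by intro r; simp [hyh, hz0]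
  have hyhS : ∀ (i' : Fin (k - 1)) (r : Fin m),
      yh ⟨(i' : ℕ) + 1, by have := i'.isLt; omega⟩ r = zz (i', r) := by
    intro i' r
    simp only [hyh]
    rw [dif_neg (by simp)]
    congr 1
  have hLv : LvPoly v y = q := by
    funext r
    simp only [LvPoly, hy]
    calc ∑ i, C (v i) * ∑ i2, C (M i2 i) * yh i2 r
        = ∑ i2, C (e1 α i2) * yh i2 r := by
          simp only [Finset.mul_sum]
          rw [Finset.sum_comm]
          refine Finset.sum_congr rfl fun i2 _ => ?_
          have hM : e1 α i2 = ∑ i, M i2 i * v i := by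
            rw [← hMv]; simp [Matrix.mulVec, dotProduct]
          rw [hM, map_sum, Finset.sum_mul]
          refine Finset.sum_congr rfl fun i _ => by rw [_root_.map_mul]; ring
      _ = q r := by
          rw [Finset.sum_eq_single z0]
          · rw [he0, hyh0, ← mul_assoc, ← C_mul, mul_inv_cancel₀ hα, C_1, one_mul]
          · intro b _ hb
            have hb0 : e1 (k := k) α b = 0 := by
              simp only [e1]
              rw [if_neg]
              intro h0
              exact hb (Fin.ext (by simpa [hz0] using h0))
            rw [hb0]
            simp
          · simp
  have hyd : ∀ p, (y p).natDegree ≤ d := by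
    intro p
    simp only [hy]
    refine natDegree_sum_le_of_forall_le _ _ fun i _ => ?_
    refine natDegree_mul_le.trans ?_
    rw [natDegree_C, zero_add]
    simp only [hyh]
    split
    · exact natDegree_mul_le.trans (by rw [natDegree_C, zero_add]; exact hqd _)
    · exact hzd _
  refine ⟨y, ?_, hLv, hyd⟩
  intro w
  obtain ⟨jw, c⟩ := w
  -- the bottom blocks
  set ZX : Fin k → Fin n → F[X] := fun j c => ∑ i' : Fin (k - 1), ∑ r, zz (i', r)
      * C (X' ⟨(i' : ℕ) + 1, by have := i'.isLt; omega⟩ r (j, c)) with hZX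
  set ZY : Fin k → Fin n → F[X] := fun j c => ∑ i' : Fin (k - 1), ∑ r, zz (i', r)
      * C (Y' ⟨(i' : ℕ) + 1, by have := i'.isLt; omega⟩ r (j, c)) with hZY2
  have hcalc : ∑ p, y p * pencil Xc Yc p (jw, c)
      = XT jw c * X + YT jw c + (ZX jw c * X + ZY jw c) := by
    have step1 : ∀ (i : Fin k) (r : Fin m),
        ∑ j2, C (M i j2) * yh i r * (C (Xc (j2, r) (jw, c)) * X + C (Yc (j2, r) (jw, c)))
          = yh i r * (C (X' i r (jw, c)) * X + C (Y' i r (jw, c))) := by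
      intro i r
      simp only [hX', hY', map_sum]
      rw [Finset.sum_mul, ← Finset.sum_add_distrib, Finset.mul_sum]
      refine Finset.sum_congr rfl fun j2 _ => by
        rw [_root_.map_mul, _root_.map_mul]; ring
    calc ∑ p, y p * pencil Xc Yc p (jw, c)
        = ∑ p : Fin k × Fin m, ∑ i, C (M i p.1) * yh i p.2 * pencil Xc Yc p (jw, c) := by
          refine Finset.sum_congr rfl fun p _ => ?_
          simp only [hy]
          rw [Finset.sum_mul]
      _ = ∑ i, ∑ p : Fin k × Fin m, C (M i p.1) * yh i p.2 * pencil Xc Yc p (jw, c) :=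
          Finset.sum_comm
      _ = ∑ i, ∑ r, yh i r * (C (X' i r (jw, c)) * X + C (Y' i r (jw, c))) := by
          refine Finset.sum_congr rfl fun i _ => ?_
          rw [Fintype.sum_prod_type, Finset.sum_comm]
          refine Finset.sum_congr rfl fun r _ => ?_
          rw [← step1 i r]
          exact Finset.sum_congr rfl fun j2 _ => by simp only [pencil, Matrix.of_apply]
      _ = (∑ r, yh z0 r * (C (X' z0 r (jw, c)) * X + C (Y' z0 r (jw, c))))
          + ∑ i' : Fin (k - 1), ∑ r, yh ⟨(i' : ℕ) + 1, by have := i'.isLt; omega⟩ r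
              * (C (X' ⟨(i' : ℕ) + 1, by have := i'.isLt; omega⟩ r (jw, c)) * X
                + C (Y' ⟨(i' : ℕ) + 1, by have := i'.isLt; omega⟩ r (jw, c))) :=
          g9_sum_split hk _
      _ = XT jw c * X + YT jw c + (ZX jw c * X + ZY jw c) := by
          simp only [hyh0, hyhS, hXT, hYT, hZX, hZY2, mul_add, ← mul_assoc,
            Finset.sum_add_distrib, ← Finset.sum_mul]
  rw [hcalc]
  -- block facts
  have fXT0 : ∀ c, XT z0 c = g k c := by
    intro c
    simp only [hXT, hg]
    refine Finset.sum_congr rfl fun r _ => ?_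
    rw [hX0 z0 r c, he0, C_mul]
    calc C α⁻¹ * q r * (C α * C (Ae k r c))
        = q r * C (Ae k r c) * (C α⁻¹ * C α) := by ring
      _ = q r * C (Ae k r c) := by rw [hαα, mul_one]
  have fXTj : ∀ (j : Fin k), 0 < (j : ℕ) → ∀ c,
      XT j c = g (k - (j : ℕ)) c - YT ⟨(j : ℕ) - 1, by have := j.isLt; omega⟩ c := by
    intro j hj c
    have hX'v : ∀ r, X' z0 r (j, c)
        = α * Ae (k - (j : ℕ)) r c - Y' z0 r (⟨(j : ℕ) - 1, by have := j.isLt; omega⟩, c) := by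
      intro r
      have h2 := hXY z0 r c j hj
      rw [he0] at h2
      exact eq_sub_of_add_eq h2
    simp only [hXT, hYT, hg]
    rw [← Finset.sum_sub_distrib]
    refine Finset.sum_congr rfl fun r _ => ?_
    rw [hX'v r, map_sub, C_mul]
    calc C α⁻¹ * q r * (C α * C (Ae (k - (j : ℕ)) r c)
          - C (Y' z0 r (⟨(j : ℕ) - 1, by have := j.isLt; omega⟩, c)))
        = q r * C (Ae (k - (j : ℕ)) r c) * (C α⁻¹ * C α)
          - C α⁻¹ * q r * C (Y' z0 r (⟨(j : ℕ) - 1, by have := j.isLt; omega⟩, c)) := by ring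
      _ = _ := by rw [hαα, mul_one]
  have fYTl : ∀ c, YT ⟨k - 1, by omega⟩ c = g 0 c := by
    intro c
    simp only [hYT, hg]
    refine Finset.sum_congr rfl fun r _ => ?_
    rw [hYl z0 r c, he0, C_mul]
    calc C α⁻¹ * q r * (C α * C (Ae 0 r c))
        = q r * C (Ae 0 r c) * (C α⁻¹ * C α) := by ring
      _ = q r * C (Ae 0 r c) := by rw [hαα, mul_one]
  have fZX0 : ∀ c, ZX z0 c = 0 := by
    intro c
    simp only [hZX]
    refine Finset.sum_eq_zero fun i' _ => Finset.sum_eq_zero fun r _ => ?_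
    rw [hX0 _ r c, heS i']
    simp
  have fZXj : ∀ (j : Fin k), 0 < (j : ℕ) → ∀ c,
      ZX j c = -ZY ⟨(j : ℕ) - 1, by have := j.isLt; omega⟩ c := by
    intro j hj c
    simp only [hZX, hZY2, ← Finset.sum_neg_distrib]
    refine Finset.sum_congr rfl fun i' _ => Finset.sum_congr rfl fun r _ => ?_
    have h2 := hXY ⟨(i' : ℕ) + 1, by have := i'.isLt; omega⟩ r c j hj
    rw [heS i', zero_mul] at h2
    rw [eq_neg_of_add_eq_zero_left h2, map_neg, mul_neg]
  have fZYu : ∀ (j : Fin k) (hj : (j : ℕ) < k - 1) (c : Fin n),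
      ZY j c = u ⟨(j : ℕ), hj⟩ c := by
    intro j hj c
    have h2 := hzY (⟨(j : ℕ), hj⟩, c)
    rw [← h2]
    simp only [hZY2]
    rw [Fintype.sum_prod_type]
  have fZYl : ∀ c, ZY ⟨k - 1, by omega⟩ c = 0 := by
    intro c
    simp only [hZY2]
    refine Finset.sum_eq_zero fun i' _ => Finset.sum_eq_zero fun r _ => ?_
    rw [hYl _ r c, heS i']
    simp
  have hexp : ∀ (j' : Fin (k - 1)) (c : Fin n), u j' c = -YT (Fin.castLE hk1k j') c
      - ∑ t ∈ Finset.range ((j' : ℕ) + 1), X ^ ((j' : ℕ) + 1 - t) * g (k - t) c :=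
    fun _ _ => by simp only [hu]
  have hz0v : ((z0 : Fin k) : ℕ) = 0 := rfl
  by_cases hj0 : (jw : ℕ) = 0
  · have hjz : jw = z0 := Fin.ext (by rw [hz0v]; exact hj0)
    rw [hjz]
    by_cases hk1 : k = 1
    · have hlast : z0 = (⟨k - 1, by omega⟩ : Fin k) := Fin.ext (by rw [hz0v]; omega)
      rw [fXT0 c, fZX0 c, hlast, fYTl c, fZYl c]
      have h3 := hg0 c
      have ek : g k c = g 1 c := by rw [hk1]
      rw [hk1, Finset.sum_range_succ, Finset.sum_range_one] at h3
      rw [ek]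
      linear_combination h3
    · have hlt : ((z0 : Fin k) : ℕ) < k - 1 := by rw [hz0v]; omega
      rw [fXT0 c, fZX0 c, fZYu z0 hlt c, hexp]
      have eA : Fin.castLE hk1k (⟨((z0 : Fin k) : ℕ), hlt⟩ : Fin (k - 1)) = z0 :=
        Fin.ext rfl
      have eV : ((⟨((z0 : Fin k) : ℕ), hlt⟩ : Fin (k - 1)) : ℕ) = 0 := rfl
      rw [eA]
      simp only [eV]
      rw [Finset.sum_range_one]
      simp only [Nat.sub_zero, zero_add, pow_one]
      ring
  · have hjpos : 0 < (jw : ℕ) := by omega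
    by_cases hjl : (jw : ℕ) < k - 1
    · -- middle block columns
      have pfk : (jw : ℕ) - 1 < k := by have := jw.isLt; omega
      have pfk1 : ((⟨(jw : ℕ) - 1, pfk⟩ : Fin k) : ℕ) < k - 1 := by
        show (jw : ℕ) - 1 < k - 1; omega
      rw [fXTj jw hjpos c, fZXj jw hjpos c, fZYu jw hjl c,
        fZYu ⟨(jw : ℕ) - 1, pfk⟩ pfk1 c, hexp, hexp]
      have eA : Fin.castLE hk1k (⟨((jw : Fin k) : ℕ), hjl⟩ : Fin (k - 1)) = jw :=
        Fin.ext rfl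
      have eB : Fin.castLE hk1k
          (⟨((⟨(jw : ℕ) - 1, pfk⟩ : Fin k) : ℕ), pfk1⟩ : Fin (k - 1))
          = (⟨(jw : ℕ) - 1, pfk⟩ : Fin k) := Fin.ext rfl
      have eV1 : ((⟨((jw : Fin k) : ℕ), hjl⟩ : Fin (k - 1)) : ℕ) = (jw : ℕ) := rfl
      have eV2 : ((⟨((⟨(jw : ℕ) - 1, pfk⟩ : Fin k) : ℕ), pfk1⟩ : Fin (k - 1)) : ℕ)
          = (jw : ℕ) - 1 := rfl
      rw [eA, eB]
      simp only [eV1, eV2]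
      have em : (jw : ℕ) - 1 + 1 = (jw : ℕ) := by omega
      simp only [em]
      have hsucc : ∑ t ∈ Finset.range ((jw : ℕ) + 1), X ^ ((jw : ℕ) + 1 - t) * g (k - t) c
          = X * (∑ t ∈ Finset.range (jw : ℕ), X ^ ((jw : ℕ) - t) * g (k - t) c)
            + X * g (k - (jw : ℕ)) c := by
        rw [Finset.sum_range_succ]
        have e4 : (jw : ℕ) + 1 - (jw : ℕ) = 1 := by omega
        rw [e4, pow_one]
        refine congrArg (fun s => s + X * g (k - (jw : ℕ)) c) ?_
        refine (Finset.sum_congr rfl fun t ht => ?_).trans (Finset.mul_sum _ _ _).symm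
        simp only [Finset.mem_range] at ht
        have e3 : (jw : ℕ) + 1 - t = ((jw : ℕ) - t) + 1 := by omega
        rw [e3, pow_succ]
        ring
      rw [hsucc]
      ring
    · -- last block column
      have hjk : (jw : ℕ) = k - 1 := by have := jw.isLt; omega
      have pfA : k - 1 < k := by omega
      have hjeq : jw = (⟨k - 1, pfA⟩ : Fin k) := Fin.ext (by rw [hjk])
      rw [hjeq, fYTl c, fZYl c]
      have hjpos' : 0 < ((⟨k - 1, pfA⟩ : Fin k) : ℕ) := by show 0 < k - 1; omega
      rw [fXTj _ hjpos' c, fZXj _ hjpos' c]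
      have pfS : ((⟨k - 1, pfA⟩ : Fin k) : ℕ) - 1 < k := by show k - 1 - 1 < k; omega
      have pfB : ((⟨((⟨k - 1, pfA⟩ : Fin k) : ℕ) - 1, pfS⟩ : Fin k) : ℕ) < k - 1 := by
        show k - 1 - 1 < k - 1; omega
      rw [fZYu ⟨((⟨k - 1, pfA⟩ : Fin k) : ℕ) - 1, pfS⟩ pfB c, hexp]
      have eB : Fin.castLE hk1k
          (⟨((⟨((⟨k - 1, pfA⟩ : Fin k) : ℕ) - 1, pfS⟩ : Fin k) : ℕ), pfB⟩ : Fin (k - 1))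
          = (⟨((⟨k - 1, pfA⟩ : Fin k) : ℕ) - 1, pfS⟩ : Fin k) := Fin.ext rfl
      rw [eB]
      have eV : ((⟨((⟨((⟨k - 1, pfA⟩ : Fin k) : ℕ) - 1, pfS⟩ : Fin k) : ℕ), pfB⟩ :
          Fin (k - 1)) : ℕ) = k - 2 := by show k - 1 - 1 = k - 2; omega
      rw [eV]
      have ek2 : k - 2 + 1 = k - 1 := by omega
      simp only [ek2]
      have eK : k - ((⟨k - 1, pfA⟩ : Fin k) : ℕ) = 1 := by show k - (k - 1) = 1; omega
      simp only [eK]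
      have hXT2 : X * (∑ t ∈ Finset.range (k - 1), X ^ (k - 1 - t) * g (k - t) c)
          = ∑ i ∈ Finset.Ico (k - (k - 1) + 1) (k + 1), X ^ i * g i c := by
        rw [Finset.mul_sum, ← hrefl (k - 1) (by omega) c]
        refine Finset.sum_congr rfl fun t ht => ?_
        simp only [Finset.mem_range] at ht
        have e3 : k - t = (k - 1 - t) + 1 := by omega
        rw [e3, pow_succ]
        ring
      have hsplit := Finset.sum_range_add_sum_Ico (fun i => X ^ i * g i c)
        (show 2 ≤ k + 1 by omega)
      rw [hg0 c, Finset.sum_range_succ, Finset.sum_range_one] at hsplit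
      have e2' : k - (k - 1) + 1 = 2 := by omega
      rw [e2'] at hXT2
      linear_combination hsplit + hXT2

lemma g9_Lv_deg_le (v : Fin k → F) (y : Fin k × Fin m → F[X]) :
    polyVecDeg (LvPoly v y) ≤ polyVecDeg y := by
  unfold polyVecDeg LvPoly
  refine Finset.sup_le fun r _ => ?_
  refine natDegree_sum_le_of_forall_le _ _ fun i _ => ?_
  refine natDegree_mul_le.trans ?_
  rw [natDegree_C, zero_add]
  exact Finset.le_sup (f := fun p => (y p).natDegree) (Finset.mem_univ (i, r))

end Statement9Aux

set_option maxHeartbeats 1000000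
set_option synthInstance.maxHeartbeats 1000000

/-- For `m ≥ n` and `L ∈ 𝕃₁(P)` of full `Z`-rank with nonzero right
ansatz vector `v`, the map `𝓛_v : N_l(L) → N_l(P)`, `y(λ) ↦ (vᵀ ⊗ I_m) y(λ)` is a
surjective `F(λ)`-linear map; it maps the vector polynomials in `N_l(L)` onto the vector
polynomials in `N_l(P)`, and every vector polynomial `q(λ) ∈ N_l(P)` of degree `δ` has a
preimage in `N_l(L)` which is a vector polynomial of degree exactly `δ`. -/
theorem statement_9 {F : Type*} [RCLike F] {k m n : ℕ} (hk : 0 < k) (hmn : n ≤ m)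
    (A : Fin (k + 1) → Matrix (Fin m) (Fin n) F)
    (Xc Yc : Matrix (Fin k × Fin m) (Fin k × Fin n) F)
    (v : Fin k → F) (hv : v ≠ 0)
    (hL : RightAnsatz (matPoly A) (pencil Xc Yc) v)
    (hZ : FullZrank1 Yc v) :
    (∃ φ : Nl (pencil Xc Yc) →ₗ[RatFunc F] Nl (matPoly A),
      Function.Surjective φ ∧
        ∀ y : Nl (pencil Xc Yc),
          (φ y : Fin m → RatFunc F) =
            (vproj v).mulVec (y : Fin k × Fin m → RatFunc F)) ∧
    (∀ y : Fin k × Fin m → F[X], polyVec y ∈ Nl (pencil Xc Yc) →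
      polyVec (LvPoly v y) ∈ Nl (matPoly A)) ∧
    (∀ q : Fin m → F[X], polyVec q ∈ Nl (matPoly A) →
      ∃ y : Fin k × Fin m → F[X],
        polyVec y ∈ Nl (pencil Xc Yc) ∧ LvPoly v y = q ∧ polyVecDeg y = polyVecDeg q) := by
  classical
  obtain ⟨M, α, _hMu, hα, hMv, hrank⟩ := hZ
  obtain ⟨B, hB⟩ := g9_left_inv (Zmat1 M Yc) (by simpa [Fintype.card_prod] using hrank)
  have part2 : ∀ y : Fin k × Fin m → F[X], polyVec y ∈ Nl (pencil Xc Yc) →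
      polyVec (LvPoly v y) ∈ Nl (matPoly A) := by
    intro y hy
    have h2 := g9_push A Xc Yc v hL (polyVec y) hy
    rwa [g9_vproj] at h2
  refine ⟨⟨LinearMap.codRestrict (Nl (matPoly A))
      (((vproj v).mulVecLin).comp (Nl (pencil Xc Yc)).subtype)
      (fun yy => g9_push A Xc Yc v hL _ yy.2), ?_, fun y => rfl⟩, part2, ?_⟩
  · rintro ⟨x, hx⟩
    obtain ⟨b, hb⟩ := IsLocalization.exist_integer_multiples_of_finite
      (nonZeroDivisors F[X]) x
    choose qq hqq using fun i => hb i
    set s : RatFunc F := algebraMap F[X] (RatFunc F) (b : F[X]) with hs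
    have hb0 : (b : F[X]) ≠ 0 := nonZeroDivisors.coe_ne_zero b
    have hs0 : s ≠ 0 := by
      rw [hs]
      exact fun h0 => hb0 ((map_eq_zero_iff _ (RatFunc.algebraMap_injective F)).mp h0)
    have hpq : polyVec qq = s • x := by
      funext i
      show algebraMap F[X] (RatFunc F) (qq i) = (s • x) i
      rw [hqq i, Pi.smul_apply, Algebra.smul_def, hs, smul_eq_mul]
    have hmem : polyVec qq ∈ Nl (matPoly A) := by
      rw [hpq]; exact Submodule.smul_mem _ s hx
    have hq' : ∀ c, ∑ r, qq r * matPoly A r c = 0 := (g9_mem_Nl _ _).mp hmem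
    obtain ⟨ypoly, hy1, hy2, _⟩ := g9_main hk A Xc Yc v M α hα hMv B hB hL qq hq'
    have hymem : polyVec ypoly ∈ Nl (pencil Xc Yc) := (g9_mem_Nl _ _).mpr hy1
    refine ⟨⟨s⁻¹ • polyVec ypoly, Submodule.smul_mem _ _ hymem⟩, ?_⟩
    apply Subtype.ext
    show (vproj v).mulVec (s⁻¹ • polyVec ypoly) = x
    rw [Matrix.mulVec_smul, g9_vproj, hy2, hpq, inv_smul_smul₀ hs0]
  · intro q hq
    have hq' : ∀ c, ∑ r, q r * matPoly A r c = 0 := (g9_mem_Nl _ _).mp hq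
    obtain ⟨y, hy1, hy2, hy3⟩ := g9_main hk A Xc Yc v M α hα hMv B hB hL q hq'
    refine ⟨y, (g9_mem_Nl _ _).mpr hy1, hy2, ?_⟩
    refine le_antisymm (Finset.sup_le fun p _ => hy3 p) ?_
    rw [← hy2]
    exact g9_Lv_deg_le v y
end GLin
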